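/- If two semiformal pathways p1 and p2 have the same signature, then for any reaction r, the pathways p1 + (r) and p2 + (r) also have the same signature. -/

import Mathlib

namespace CRNVerif

variable {σ : Type} [DecidableEq σ]

/-- A state is a multiset of species. -/
abbrev State (σ : Type) := Multiset σ
/-- A reaction is a pair (reactants, products) of multisets of species. -/
abbrev Reaction (σ : Type) := Multiset σ × Multiset σ
/-- A pathway is a finite sequence of reactions. -/
abbrev Pathway (σ : Type) := List (Reaction σ)

/-- Result of applying reaction `r` in state `S` (i.e. `S ⊕ r`). -/
def applyRxn (S : State σ) (r : Reaction σ) : State σ := S - r.1 + r.2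

/-- Minimal initial state of a pathway: the smallest state in which
its reactions can occur in succession. -/
def minInit : Pathway σ → State σ
  | [] => 0
  | r :: p => r.1 + (minInit p - r.2)

/-- State reached from `S` after performing all reactions of `p` in order. -/
def finalFrom (S : State σ) : Pathway σ → State σ
  | [] => S
  | r :: p => finalFrom (applyRxn S r) p

/-- The final state of a pathway (starting from its minimal initial state). -/
def finalState (p : Pathway σ) : State σ := finalFrom (minInit p) p

/-- The state `S_i` after the first `i` reactions, starting from the minimal initial state. -/
def stateAt (p : Pathway σ) (i : ℕ) : State σ := finalFrom (minInit p) (p.take i)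

/-- A state is formal if it contains only formal species (as given by `fm`). -/
def FormalState (fm : σ → Bool) (S : State σ) : Prop := ∀ x ∈ S, fm x = true

/-- `Formal(S)`: the multiset obtained by removing all intermediate species from `S`. -/
def formalPart (fm : σ → Bool) (S : State σ) : State σ := S.filter (fun x => fm x = true)

/-- A reaction is trivial if reactants equal products. -/
def TrivialRxn (r : Reaction σ) : Prop := r.1 = r.2

/-- A CRN is a (finite) set of nontrivial reactions. -/
def NontrivialRxns (C : Finset (Reaction σ)) : Prop := ∀ r ∈ C, ¬ TrivialRxn r

/-- A formal CRN contains only formal reactions. -/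
def IsFormalCRN (fm : σ → Bool) (C : Finset (Reaction σ)) : Prop :=
  ∀ r ∈ C, FormalState fm r.1 ∧ FormalState fm r.2

/-- `p` is a pathway of the CRN `C`. -/
def PathwayOf (C : Finset (Reaction σ)) (p : Pathway σ) : Prop := ∀ r ∈ p, r ∈ C

/-- `Interleave l₁ l₂ l`: `l` can be partitioned into the two (order-preserving,
not necessarily contiguous) subsequences `l₁` and `l₂`. -/
inductive Interleave {α : Type u} : List α → List α → List α → Prop
  | nil : Interleave [] [] []
  | left {a : α} {l₁ l₂ l : List α} : Interleave l₁ l₂ l → Interleave (a :: l₁) l₂ (a :: l)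
  | right {a : α} {l₁ l₂ l : List α} : Interleave l₁ l₂ l → Interleave l₁ (a :: l₂) (a :: l)

/-- `InterleaveMany qs p`: `p` is generated by interleaving the lists in `qs`. -/
inductive InterleaveMany {α : Type u} : List (List α) → List α → Prop
  | nil : InterleaveMany [] []
  | cons {q r p : List α} {qs : List (List α)} :
      Interleave q r p → InterleaveMany qs r → InterleaveMany (q :: qs) p

/-- A pathway is semiformal if its minimal initial state is formal. -/
def Semiformal (fm : σ → Bool) (p : Pathway σ) : Prop := FormalState fm (minInit p)

/-- A formal pathway: a (nonempty) pathway whose minimal initial state and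
final state are both formal. -/
def FormalPathway (fm : σ → Bool) (p : Pathway σ) : Prop :=
  p ≠ [] ∧ FormalState fm (minInit p) ∧ FormalState fm (finalState p)

/-- A formal pathway is decomposable if it can be partitioned into two nonempty
subsequences that are each formal pathways. -/
def FDecomposable (fm : σ → Bool) (p : Pathway σ) : Prop :=
  ∃ q₁ q₂, q₁ ≠ [] ∧ q₂ ≠ [] ∧ Interleave q₁ q₂ p ∧
    FormalPathway fm q₁ ∧ FormalPathway fm q₂

/-- A prime formal pathway is a formal pathway that is not decomposable. -/
def PrimePathway (fm : σ → Bool) (p : Pathway σ) : Prop :=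
  FormalPathway fm p ∧ ¬ FDecomposable fm p

/-- The formal basis: the set of (initial state, final state) pairs of prime
formal pathways of `C`. -/
def formalBasis (fm : σ → Bool) (C : Finset (Reaction σ)) : Set (Reaction σ) :=
  { r | ∃ p, PathwayOf C p ∧ PrimePathway fm p ∧ r = (minInit p, finalState p) }

/-- Two sets of reactions are equal up to addition/removal of trivial reactions. -/
def EqUpToTrivial (A B : Set (Reaction σ)) : Prop :=
  {r ∈ A | ¬ TrivialRxn r} = {r ∈ B | ¬ TrivialRxn r}

/-- The reaction at (0-based) index `j` of `p` is a turning point: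
before it only formal species of the initial state appear, from it on only formal
species of the final state appear, and at the moment the turning point fires,
no formal species are left over. -/
def TurningAt (fm : σ → Bool) (p : Pathway σ) (j : ℕ) : Prop :=
  ∃ h : j < p.length,
    (∀ i ≤ j, formalPart fm (stateAt p i) ≤ minInit p) ∧
    (∀ i, j < i → i ≤ p.length → formalPart fm (stateAt p i) ≤ finalState p) ∧
    formalPart fm (stateAt p j - (p.get ⟨j, h⟩).1) = 0

/-- A regular formal pathway: one that implements a formal reaction,
i.e. has a turning point. -/
def RegularPathway (fm : σ → Bool) (p : Pathway σ) : Prop :=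
  FormalPathway fm p ∧ ∃ j, TurningAt fm p j

/-- A CRN is regular if every prime formal pathway is regular. -/
def RegularCRN (fm : σ → Bool) (C : Finset (Reaction σ)) : Prop :=
  ∀ p, PathwayOf C p → PrimePathway fm p → RegularPathway fm p

/-- `q` is a strong closing pathway for `p` (within CRN `C`): it can occur in the
final state of `p`, consumes no formal species, and leads back to a formal state. -/
def ClosingPathway (fm : σ → Bool) (C : Finset (Reaction σ)) (p q : Pathway σ) : Prop :=
  PathwayOf C q ∧ minInit q ≤ finalState p ∧ (∀ r ∈ q, formalPart fm r.1 = 0) ∧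
  FormalState fm (finalFrom (finalState p) q)

/-- A CRN is strongly tidy if every semiformal pathway has a strong closing pathway. -/
def StronglyTidy (fm : σ → Bool) (C : Finset (Reaction σ)) : Prop :=
  ∀ p, PathwayOf C p → Semiformal fm p → ∃ q, ClosingPathway fm C p q

/-- A semiformal pathway is decomposable if it can be partitioned into two
nonempty subsequences that are each semiformal. -/
def SDecomposable (fm : σ → Bool) (p : Pathway σ) : Prop :=
  ∃ q₁ q₂, q₁ ≠ [] ∧ q₂ ≠ [] ∧ Interleave q₁ q₂ p ∧ Semiformal fm q₁ ∧ Semiformal fm q₂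

/-- The width of a pathway: the maximum size of the states it passes through. -/
def width (p : Pathway σ) : ℕ :=
  ((List.range (p.length + 1)).map (fun i => Multiset.card (stateAt p i))).foldr max 0

/-- The branching factor of a CRN. -/
def branching (C : Finset (Reaction σ)) : ℕ :=
  C.sup (fun r => max (Multiset.card r.1) (Multiset.card r.2))

/-- Formal state `T` is reachable from `S` via reactions of `C`. -/
def Reachable (C : Finset (Reaction σ)) (S T : State σ) : Prop :=
  ∃ p, PathwayOf C p ∧ minInit p ≤ S ∧ finalFrom S p = T

/-- `C` and `C'` share no intermediate species: any species occurring in both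
CRNs is formal. -/
def NoSharedIntermediates (fm : σ → Bool) (C C' : Finset (Reaction σ)) : Prop :=
  ∀ r ∈ C, ∀ r' ∈ C', ∀ x : σ, x ∈ r.1 + r.2 → x ∈ r'.1 + r'.2 → fm x = true

/-- The formal closure of a pathway: the minimal state containing the formal part
of every state along the pathway. -/
def formalClosure (fm : σ → Bool) (p : Pathway σ) : State σ :=
  ((List.range (p.length + 1)).map (fun i => formalPart fm (stateAt p i))).foldr (· ∪ ·) 0

/-- The decomposed final states of a semiformal pathway: all pairs of final
states arising from decompositions into two (nonempty) semiformal pathways. -/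
def DFS (fm : σ → Bool) (p : Pathway σ) : Set (State σ × State σ) :=
  { T | ∃ q₁ q₂, q₁ ≠ [] ∧ q₂ ≠ [] ∧ Interleave q₁ q₂ p ∧
        Semiformal fm q₁ ∧ Semiformal fm q₂ ∧ T = (finalState q₁, finalState q₂) }

/-- The minimal state containing the formal parts of all states strictly after index `j`. -/
def rfsAt (fm : σ → Bool) (p : Pathway σ) (j : ℕ) : State σ :=
  (((List.range (p.length + 1)).filter (fun i => j < i)).map
      (fun i => formalPart fm (stateAt p i))).foldr (· ∪ ·) 0

/-- The regular final states of a pathway: the minimal states `T` witnessed by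
potential turning point reactions. -/
def RFS (fm : σ → Bool) (p : Pathway σ) : Set (State σ) :=
  { T | ∃ j, ∃ h : j < p.length,
      (∀ i ≤ j, formalPart fm (stateAt p i) ≤ minInit p) ∧
      formalPart fm (stateAt p j - (p.get ⟨j, h⟩).1) = 0 ∧
      T = rfsAt fm p j }

/-- The signature of a semiformal pathway: (initial state, final state, width,
formal closure, DFS, RFS). -/
def signature (fm : σ → Bool) (p : Pathway σ) :
    State σ × State σ × ℕ × State σ × Set (State σ × State σ) × Set (State σ) :=
  (minInit p, finalState p, width p, formalClosure fm p, DFS fm p, RFS fm p)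

/-- An annotated prime pathway: exactly its chosen turning point is annotated,
with the corresponding formal basis reaction. -/
def GoodAnnotation (fm : σ → Bool) (ap : List (Reaction σ × Option (Reaction σ))) : Prop :=
  PrimePathway fm (ap.map Prod.fst) ∧
  ∃ j, TurningAt fm (ap.map Prod.fst) j ∧
    ap.map Prod.snd = (List.range ap.length).map
      (fun i => if i = j then
          some (minInit (ap.map Prod.fst), finalState (ap.map Prod.fst)) else none)

/-- `p` can be interpreted as `q`: `q` can occur in the initial state of `p`, has
the same net effect, and there is a decomposition of `p` into prime formal pathways
such that replacing a chosen turning point of each by the corresponding formal basis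
element and removing all other reactions yields `q`. -/
def Interpreted (fm : σ → Bool) (p q : Pathway σ) : Prop :=
  minInit q ≤ minInit p ∧
  finalFrom (minInit p) q = finalState p ∧
  ∃ ap : List (Reaction σ × Option (Reaction σ)),
    ap.map Prod.fst = p ∧ (ap.map Prod.snd).reduceOption = q ∧
    ∃ aps, InterleaveMany aps ap ∧ ∀ a ∈ aps, GoodAnnotation fm a


/-! ### Auxiliary lemmas for `signature_append` -/

section SignatureAppendAux

variable (fm : σ → Bool)

theorem finalFrom_eq (p : Pathway σ) : ∀ S : State σ,
    finalFrom S p = S - minInit p + finalState p := by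
  induction p with
  | nil =>
    intro S
    simp [finalFrom, minInit, finalState]
  | cons r p ih =>
    intro S
    show finalFrom (applyRxn S r) p = _
    rw [ih]
    have h2 : finalState (r :: p) =
        applyRxn (minInit (r :: p)) r - minInit p + finalState p := by
      show finalFrom _ (r :: p) = _
      show finalFrom (applyRxn (minInit (r :: p)) r) p = _
      rw [ih]
    rw [h2]
    show applyRxn S r - minInit p + finalState p = _
    ext x
    simp only [applyRxn, minInit, Multiset.count_add, Multiset.count_sub]
    omega

theorem finalFrom_append (p q : Pathway σ) : ∀ S : State σ,
    finalFrom S (p ++ q) = finalFrom (finalFrom S p) q := by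
  induction p with
  | nil => intro S; rfl
  | cons r p ih => intro S; exact ih (applyRxn S r)

theorem finalState_nil : finalState ([] : Pathway σ) = 0 := rfl

theorem minInit_append (p q : Pathway σ) :
    minInit (p ++ q) = minInit p + (minInit q - finalState p) := by
  induction p with
  | nil => simp [minInit, finalState_nil]
  | cons r p ih =>
    show r.1 + (minInit (p ++ q) - r.2)
        = (r.1 + (minInit p - r.2)) + (minInit q - finalState (r :: p))
    have h2 : finalState (r :: p) =
        applyRxn (minInit (r :: p)) r - minInit p + finalState p := by
      show finalFrom _ (r :: p) = _
      show finalFrom (applyRxn (minInit (r :: p)) r) p = _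
      rw [finalFrom_eq]
    rw [ih, h2]
    ext x
    simp only [applyRxn, minInit, Multiset.count_add, Multiset.count_sub]
    omega

theorem minInit_single (r : Reaction σ) : minInit [r] = r.1 := by
  show r.1 + (minInit [] - r.2) = r.1
  show r.1 + ((0 : State σ) - r.2) = r.1
  rw [Multiset.zero_sub, add_zero]

theorem minInit_concat (p : Pathway σ) (r : Reaction σ) :
    minInit (p ++ [r]) = minInit p + (r.1 - finalState p) := by
  rw [minInit_append, minInit_single]

theorem finalState_concat (p : Pathway σ) (r : Reaction σ) :
    finalState (p ++ [r]) = finalState p - r.1 + r.2 := by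
  have h1 : finalState (p ++ [r])
      = finalFrom (finalFrom (minInit p + (r.1 - finalState p)) p) [r] := by
    show finalFrom (minInit (p ++ [r])) (p ++ [r]) = _
    rw [minInit_concat, finalFrom_append]
  have h2 : ∀ X : State σ, finalFrom X [r] = X - r.1 + r.2 := fun X => rfl
  rw [h1, h2, finalFrom_eq]
  ext x
  simp only [Multiset.count_add, Multiset.count_sub]
  omega

theorem minInit_take_le (p : Pathway σ) (i : ℕ) :
    minInit (p.take i) ≤ minInit p := by
  conv_rhs => rw [← List.take_append_drop i p]
  rw [minInit_append]
  exact Multiset.le_add_right _ _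

theorem stateAt_concat (p : Pathway σ) (r : Reaction σ) {i : ℕ} (hi : i ≤ p.length) :
    stateAt (p ++ [r]) i = stateAt p i + (r.1 - finalState p) := by
  have ht : (p ++ [r]).take i = p.take i := List.take_append_of_le_length hi
  simp only [stateAt]
  rw [ht, minInit_concat, finalFrom_eq, finalFrom_eq]
  have hle := minInit_take_le p i
  ext x
  have hc := Multiset.count_le_of_le x hle
  simp only [Multiset.count_add, Multiset.count_sub]
  omega

theorem stateAt_length (p : Pathway σ) : stateAt p p.length = finalState p := by
  simp [stateAt, finalState]

theorem stateAt_zero (p : Pathway σ) : stateAt p 0 = minInit p := by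
  simp [stateAt, finalFrom]

theorem stateAt_concat_length (p : Pathway σ) (r : Reaction σ) :
    stateAt (p ++ [r]) (p.length + 1) = finalState (p ++ [r]) := by
  have h : (p ++ [r]).take (p.length + 1) = p ++ [r] :=
    List.take_of_length_le (by simp)
  simp [stateAt, finalState, h]

theorem reactants_le (p : Pathway σ) {j : ℕ} (h : j < p.length) :
    (p.get ⟨j, h⟩).1 ≤ stateAt p j := by
  have e1 : minInit p
      = minInit (p.take j) + (minInit (p.drop j) - finalState (p.take j)) := by
    conv_lhs => rw [← List.take_append_drop j p]
    rw [minInit_append]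
  have e2 : p.drop j = p.get ⟨j, h⟩ :: p.drop (j + 1) := by
    rw [List.get_eq_getElem]
    exact List.drop_eq_getElem_cons h
  have e3 : minInit (p.drop j)
      = (p.get ⟨j, h⟩).1 + (minInit (p.drop (j + 1)) - (p.get ⟨j, h⟩).2) := by
    rw [e2]; simp [minInit]
  have e4 : stateAt p j = minInit p - minInit (p.take j) + finalState (p.take j) := by
    simp only [stateAt]
    rw [finalFrom_eq]
  rw [Multiset.le_iff_count]
  intro x
  have c1 := congrArg (Multiset.count x) e1
  have c3 := congrArg (Multiset.count x) e3
  have c4 := congrArg (Multiset.count x) e4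
  simp only [Multiset.count_add, Multiset.count_sub] at c1 c3 c4
  omega

theorem formalPart_add (S T : State σ) :
    formalPart fm (S + T) = formalPart fm S + formalPart fm T :=
  Multiset.filter_add _ _ _

theorem count_formalPart (x : σ) (S : State σ) :
    Multiset.count x (formalPart fm S)
      = if fm x = true then Multiset.count x S else 0 :=
  Multiset.count_filter

theorem formalPart_add_le_add_iff (A M D : State σ) :
    formalPart fm (A + D) ≤ M + D ↔ formalPart fm A ≤ M := by
  simp only [Multiset.le_iff_count]
  constructor
  · intro h x
    have hx := h x
    rw [count_formalPart] at hx ⊢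
    by_cases hfx : fm x = true
    · rw [if_pos hfx] at hx ⊢
      simp only [Multiset.count_add] at hx
      omega
    · rw [if_neg hfx]
      exact Nat.zero_le _
  · intro h x
    have hx := h x
    rw [count_formalPart] at hx ⊢
    by_cases hfx : fm x = true
    · rw [if_pos hfx] at hx ⊢
      simp only [Multiset.count_add]
      omega
    · rw [if_neg hfx]
      exact Nat.zero_le _

theorem formalPart_sub_eq_zero_iff {A C : State σ} (D : State σ) (hC : C ≤ A) :
    formalPart fm (A + D - C) = 0
      ↔ (formalPart fm (A - C) = 0 ∧ formalPart fm D = 0) := by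
  rw [Multiset.le_iff_count] at hC
  constructor
  · intro h
    have key : ∀ x, fm x = true →
        Multiset.count x A + Multiset.count x D ≤ Multiset.count x C := by
      intro x hfx
      have h1 := congrArg (Multiset.count x) h
      rw [count_formalPart, if_pos hfx] at h1
      simp only [Multiset.count_sub, Multiset.count_add, Multiset.count_zero] at h1
      omega
    constructor
    · ext x
      rw [count_formalPart, Multiset.count_zero]
      by_cases hfx : fm x = true
      · rw [if_pos hfx]
        have := key x hfx
        simp only [Multiset.count_sub]
        omega
      · rw [if_neg hfx]
    · ext x
      rw [count_formalPart, Multiset.count_zero]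
      by_cases hfx : fm x = true
      · rw [if_pos hfx]
        have k1 := key x hfx
        have k2 := hC x
        omega
      · rw [if_neg hfx]
  · rintro ⟨h1, h2⟩
    ext x
    rw [count_formalPart, Multiset.count_zero]
    by_cases hfx : fm x = true
    · rw [if_pos hfx]
      have k1 := congrArg (Multiset.count x) h1
      have k2 := congrArg (Multiset.count x) h2
      rw [count_formalPart, if_pos hfx, Multiset.count_zero] at k1
      rw [count_formalPart, if_pos hfx, Multiset.count_zero] at k2
      have h3 := hC x
      simp only [Multiset.count_sub, Multiset.count_add] at k1 ⊢
      omega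
    · rw [if_neg hfx]

theorem multiset_sandwich (A B : State σ) : A + (B - A) - B = A - B := by
  ext x
  simp only [Multiset.count_add, Multiset.count_sub]
  omega

theorem FormalState_add (A B : State σ) :
    FormalState fm (A + B) ↔ FormalState fm A ∧ FormalState fm B := by
  simp only [FormalState, Multiset.mem_add]
  constructor
  · intro h; exact ⟨fun x hx => h x (Or.inl hx), fun x hx => h x (Or.inr hx)⟩
  · rintro ⟨hA, hB⟩ x (hx | hx)
    · exact hA x hx
    · exact hB x hx

theorem semiformal_concat_iff (p : Pathway σ) (r : Reaction σ) :
    Semiformal fm (p ++ [r])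
      ↔ Semiformal fm p ∧ FormalState fm (r.1 - finalState p) := by
  simp only [Semiformal]
  rw [minInit_concat, FormalState_add]

/-! Interleave lemmas -/

theorem interleave_nil_left : ∀ l : List (Reaction σ), Interleave [] l l := by
  intro l
  induction l with
  | nil => exact Interleave.nil
  | cons a l ih => exact Interleave.right ih

theorem interleave_symm {q₁ q₂ l : List (Reaction σ)}
    (h : Interleave q₁ q₂ l) : Interleave q₂ q₁ l := by
  induction h with
  | nil => exact Interleave.nil
  | left _ ih => exact Interleave.right ih
  | right _ ih => exact Interleave.left ih

theorem interleave_snoc_left {q₁ q₂ l : List (Reaction σ)} (a : Reaction σ)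
    (h : Interleave q₁ q₂ l) : Interleave (q₁ ++ [a]) q₂ (l ++ [a]) := by
  induction h with
  | nil => exact Interleave.left Interleave.nil
  | left _ ih => exact Interleave.left ih
  | right _ ih => exact Interleave.right ih

theorem eq_of_interleave_nil : ∀ {l q : List (Reaction σ)},
    Interleave [] q l → q = l := by
  intro l
  induction l with
  | nil => intro q h; cases h; rfl
  | cons a l ih =>
    intro q h
    cases h with
    | right h' => rw [ih h']

theorem interleave_snoc (a : Reaction σ) : ∀ {l q₁ q₂ : List (Reaction σ)},
    Interleave q₁ q₂ (l ++ [a]) →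
      (∃ t, q₁ = t ++ [a] ∧ Interleave t q₂ l)
      ∨ (∃ t, q₂ = t ++ [a] ∧ Interleave q₁ t l) := by
  intro l
  induction l with
  | nil =>
    intro q₁ q₂ h
    cases h with
    | left h' => cases h'; exact Or.inl ⟨[], rfl, Interleave.nil⟩
    | right h' => cases h'; exact Or.inr ⟨[], rfl, Interleave.nil⟩
  | cons b l ih =>
    intro q₁ q₂ h
    cases h with
    | left h' =>
      rcases ih h' with ⟨t, rfl, ht⟩ | ⟨t, rfl, ht⟩
      · exact Or.inl ⟨b :: t, rfl, Interleave.left ht⟩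
      · exact Or.inr ⟨t, rfl, Interleave.left ht⟩
    | right h' =>
      rcases ih h' with ⟨t, rfl, ht⟩ | ⟨t, rfl, ht⟩
      · exact Or.inl ⟨t, rfl, Interleave.right ht⟩
      · exact Or.inr ⟨b :: t, rfl, Interleave.right ht⟩

/-! fold lemmas -/

theorem foldr_max_base (x : ℕ) : ∀ l : List ℕ,
    l.foldr max x = max (l.foldr max 0) x := by
  intro l
  induction l with
  | nil => simp
  | cons a l ih => simp only [List.foldr_cons, ih, Nat.max_assoc]

theorem foldr_max_concat (l : List ℕ) (x : ℕ) :
    (l ++ [x]).foldr max 0 = max (l.foldr max 0) x := by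
  rw [List.foldr_append, foldr_max_base]
  simp

theorem foldr_max_map_add (c : ℕ) : ∀ l : List ℕ, l ≠ [] →
    (l.map (· + c)).foldr max 0 = l.foldr max 0 + c := by
  intro l
  induction l with
  | nil => intro h; exact absurd rfl h
  | cons a l ih =>
    intro _
    cases l with
    | nil => simp
    | cons b m =>
      simp only [List.map_cons, List.foldr_cons] at *
      rw [ih (by simp)]
      exact max_add_add_right a _ c

theorem le_foldr_max {x : ℕ} : ∀ {l : List ℕ}, x ∈ l → x ≤ l.foldr max 0 := by
  intro l
  induction l with
  | nil => intro h; cases h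
  | cons a l ih =>
    intro h
    rcases List.mem_cons.mp h with rfl | h
    · exact le_max_left _ _
    · exact le_trans (ih h) (le_max_right _ _)

theorem union_zero (A : State σ) : A ∪ 0 = A := by
  ext x; simp [Multiset.count_union]

theorem zero_union (A : State σ) : (0 : State σ) ∪ A = A := by
  ext x; simp [Multiset.count_union]

theorem foldr_union_base (x : State σ) : ∀ l : List (State σ),
    l.foldr (· ∪ ·) x = l.foldr (· ∪ ·) 0 ∪ x := by
  intro l
  induction l with
  | nil => simp [zero_union]
  | cons a l ih =>
    simp only [List.foldr_cons, ih]
    ext y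
    simp [Multiset.count_union, Nat.max_assoc]

theorem foldr_union_concat (l : List (State σ)) (x : State σ) :
    (l ++ [x]).foldr (· ∪ ·) 0 = l.foldr (· ∪ ·) 0 ∪ x := by
  rw [List.foldr_append, foldr_union_base]
  simp only [List.foldr_cons, List.foldr_nil, union_zero]

theorem foldr_union_map_add (e : State σ) : ∀ l : List (State σ), l ≠ [] →
    (l.map (· + e)).foldr (· ∪ ·) 0 = l.foldr (· ∪ ·) 0 + e := by
  intro l
  induction l with
  | nil => intro h; exact absurd rfl h
  | cons a l ih =>
    intro _
    cases l with
    | nil =>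
      simp only [List.map_cons, List.map_nil, List.foldr_cons, List.foldr_nil]
      ext x; simp [Multiset.count_union, Multiset.count_add]
    | cons b m =>
      simp only [List.map_cons, List.foldr_cons] at *
      rw [ih (by simp)]
      ext x
      simp only [Multiset.count_union, Multiset.count_add]
      omega

theorem union_le_iff (A B M : State σ) : A ∪ B ≤ M ↔ A ≤ M ∧ B ≤ M := by
  simp only [Multiset.le_iff_count, Multiset.count_union, Nat.max_le]
  exact forall_and

theorem foldr_union_le_iff (M : State σ) : ∀ l : List (State σ),
    (l.foldr (· ∪ ·) 0 ≤ M ↔ ∀ x ∈ l, x ≤ M) := by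
  intro l
  induction l with
  | nil => simp
  | cons a l ih =>
    simp only [List.foldr_cons, union_le_iff, ih, List.mem_cons]
    constructor
    · rintro ⟨h1, h2⟩ x (rfl | hx)
      · exact h1
      · exact h2 x hx
    · intro h
      exact ⟨h a (Or.inl rfl), fun x hx => h x (Or.inr hx)⟩

end SignatureAppendAux


section SignatureAppendAux2

variable (fm : σ → Bool)

theorem width_concat (p : Pathway σ) (r : Reaction σ) :
    width (p ++ [r]) = max (width p + Multiset.card (r.1 - finalState p))
      (Multiset.card (finalState (p ++ [r]))) := by
  have hrange : List.range ((p ++ [r]).length + 1)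
      = List.range (p.length + 1) ++ [p.length + 1] := by
    have h : (p ++ [r]).length + 1 = (p.length + 1) + 1 := by simp
    rw [h, List.range_succ]
  show ((List.range ((p ++ [r]).length + 1)).map
      (fun i => Multiset.card (stateAt (p ++ [r]) i))).foldr max 0 = _
  rw [hrange, List.map_append, List.map_cons, List.map_nil, foldr_max_concat,
    stateAt_concat_length]
  congr 1
  have hmap : (List.range (p.length + 1)).map
        (fun i => Multiset.card (stateAt (p ++ [r]) i))
      = ((List.range (p.length + 1)).map (fun i => Multiset.card (stateAt p i))).map
          (· + Multiset.card (r.1 - finalState p)) := by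
    rw [List.map_map]
    apply List.map_congr_left
    intro i hi
    have hi' : i ≤ p.length := Nat.lt_succ_iff.mp (List.mem_range.mp hi)
    simp only [Function.comp]
    rw [stateAt_concat p r hi', Multiset.card_add]
  rw [hmap, foldr_max_map_add _ _ (by simp)]
  rfl

theorem formalClosure_concat (p : Pathway σ) (r : Reaction σ) :
    formalClosure fm (p ++ [r])
      = (formalClosure fm p + formalPart fm (r.1 - finalState p))
          ∪ formalPart fm (finalState (p ++ [r])) := by
  have hrange : List.range ((p ++ [r]).length + 1)
      = List.range (p.length + 1) ++ [p.length + 1] := by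
    have h : (p ++ [r]).length + 1 = (p.length + 1) + 1 := by simp
    rw [h, List.range_succ]
  show ((List.range ((p ++ [r]).length + 1)).map
      (fun i => formalPart fm (stateAt (p ++ [r]) i))).foldr (· ∪ ·) 0 = _
  rw [hrange, List.map_append, List.map_cons, List.map_nil, foldr_union_concat,
    stateAt_concat_length]
  congr 1
  have hmap : (List.range (p.length + 1)).map
        (fun i => formalPart fm (stateAt (p ++ [r]) i))
      = ((List.range (p.length + 1)).map (fun i => formalPart fm (stateAt p i))).map
          (· + formalPart fm (r.1 - finalState p)) := by
    rw [List.map_map]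
    apply List.map_congr_left
    intro i hi
    have hi' : i ≤ p.length := Nat.lt_succ_iff.mp (List.mem_range.mp hi)
    simp only [Function.comp]
    rw [stateAt_concat p r hi', formalPart_add]
  rw [hmap, foldr_union_map_add _ _ (by simp)]
  rfl

theorem formalClosure_le_iff (p : Pathway σ) (M : State σ) :
    formalClosure fm p ≤ M ↔ ∀ i ≤ p.length, formalPart fm (stateAt p i) ≤ M := by
  rw [show formalClosure fm p = ((List.range (p.length + 1)).map
      (fun i => formalPart fm (stateAt p i))).foldr (· ∪ ·) 0 from rfl,
    foldr_union_le_iff]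
  constructor
  · intro h i hi
    exact h _ (List.mem_map.mpr ⟨i, List.mem_range.mpr (Nat.lt_succ_of_le hi), rfl⟩)
  · rintro h x hx
    obtain ⟨i, hi, rfl⟩ := List.mem_map.mp hx
    exact h i (Nat.lt_succ_iff.mp (List.mem_range.mp hi))

theorem rfsAt_concat_lt (p : Pathway σ) (r : Reaction σ) {j : ℕ} (hj : j < p.length) :
    rfsAt fm (p ++ [r]) j
      = (rfsAt fm p j + formalPart fm (r.1 - finalState p))
          ∪ formalPart fm (finalState (p ++ [r])) := by
  have hrange : List.range ((p ++ [r]).length + 1)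
      = List.range (p.length + 1) ++ [p.length + 1] := by
    have h : (p ++ [r]).length + 1 = (p.length + 1) + 1 := by simp
    rw [h, List.range_succ]
  have hj1 : j < p.length + 1 := by omega
  have hfilter : List.filter (fun i => decide (j < i)) [p.length + 1]
      = [p.length + 1] := by simp [hj1]
  simp only [rfsAt]
  rw [hrange, List.filter_append, hfilter, List.map_append, List.map_cons,
    List.map_nil, foldr_union_concat, stateAt_concat_length]
  congr 1
  have hmap : ((List.range (p.length + 1)).filter (fun i => decide (j < i))).map
        (fun i => formalPart fm (stateAt (p ++ [r]) i))
      = (((List.range (p.length + 1)).filter (fun i => decide (j < i))).map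
          (fun i => formalPart fm (stateAt p i))).map
          (· + formalPart fm (r.1 - finalState p)) := by
    rw [List.map_map]
    apply List.map_congr_left
    intro i hi
    have hi' : i ≤ p.length :=
      Nat.lt_succ_iff.mp (List.mem_range.mp (List.mem_of_mem_filter hi))
    simp only [Function.comp]
    rw [stateAt_concat p r hi', formalPart_add]
  have hnil : ((List.range (p.length + 1)).filter (fun i => decide (j < i))).map
      (fun i => formalPart fm (stateAt p i)) ≠ [] := by
    have hmem : p.length ∈ (List.range (p.length + 1)).filter
        (fun i => decide (j < i)) :=
      List.mem_filter.mpr ⟨List.mem_range.mpr (Nat.lt_succ_self _), by simpa using hj⟩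
    intro hcon
    rw [List.map_eq_nil_iff] at hcon
    rw [hcon] at hmem
    cases hmem
  rw [hmap, foldr_union_map_add _ _ hnil]

theorem rfsAt_concat_length (p : Pathway σ) (r : Reaction σ) :
    rfsAt fm (p ++ [r]) p.length = formalPart fm (finalState (p ++ [r])) := by
  have hrange : List.range ((p ++ [r]).length + 1)
      = List.range (p.length + 1) ++ [p.length + 1] := by
    have h : (p ++ [r]).length + 1 = (p.length + 1) + 1 := by simp
    rw [h, List.range_succ]
  have h1 : (List.range (p.length + 1)).filter (fun i => decide (p.length < i))
      = [] := by
    rw [List.filter_eq_nil_iff]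
    intro i hi
    have := List.mem_range.mp hi
    simp only [decide_eq_true_eq]
    omega
  have h2 : List.filter (fun i => decide (p.length < i)) [p.length + 1]
      = [p.length + 1] := by
    simp
  simp only [rfsAt]
  rw [hrange, List.filter_append, h1, h2]
  simp only [List.nil_append, List.map_cons, List.map_nil, List.foldr_cons,
    List.foldr_nil]
  rw [stateAt_concat_length, union_zero]

theorem condA_concat (p : Pathway σ) (r : Reaction σ) {j : ℕ} (hj : j ≤ p.length) :
    (∀ i ≤ j, formalPart fm (stateAt (p ++ [r]) i) ≤ minInit (p ++ [r]))
      ↔ (∀ i ≤ j, formalPart fm (stateAt p i) ≤ minInit p) := by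
  constructor
  · intro h i hi
    have h' := h i hi
    rw [stateAt_concat p r (le_trans hi hj), minInit_concat,
      formalPart_add_le_add_iff] at h'
    exact h'
  · intro h i hi
    rw [stateAt_concat p r (le_trans hi hj), minInit_concat,
      formalPart_add_le_add_iff]
    exact h i hi

theorem RFS_concat_subset (p₁ p₂ : Pathway σ) (r : Reaction σ)
    (hmin : minInit p₁ = minInit p₂) (hfin : finalState p₁ = finalState p₂)
    (hfc : formalClosure fm p₁ = formalClosure fm p₂)
    (hrfs : RFS fm p₁ = RFS fm p₂) :
    RFS fm (p₁ ++ [r]) ⊆ RFS fm (p₂ ++ [r]) := by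
  rintro T ⟨j, h, ha, hb, rfl⟩
  by_cases hj : j < p₁.length
  · -- turning point inside p₁
    have hget : (p₁ ++ [r]).get ⟨j, h⟩ = p₁.get ⟨j, hj⟩ := by
      simp only [List.get_eq_getElem]
      exact List.getElem_append_left hj
    rw [hget, stateAt_concat p₁ r (le_of_lt hj)] at hb
    have hb2 := (formalPart_sub_eq_zero_iff fm _ (reactants_le p₁ hj)).mp hb
    have ha2 := (condA_concat fm p₁ r (le_of_lt hj)).mp ha
    have hmem : rfsAt fm p₁ j ∈ RFS fm p₁ := ⟨j, hj, ha2, hb2.1, rfl⟩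
    rw [hrfs] at hmem
    obtain ⟨j₂, hj₂, ha₂, hb₂, hT⟩ := hmem
    have hlt₂ : j₂ < (p₂ ++ [r]).length := by simp; omega
    refine ⟨j₂, hlt₂, (condA_concat fm p₂ r (le_of_lt hj₂)).mpr ha₂, ?_, ?_⟩
    · have hget₂ : (p₂ ++ [r]).get ⟨j₂, hlt₂⟩ = p₂.get ⟨j₂, hj₂⟩ := by
        simp only [List.get_eq_getElem]
        exact List.getElem_append_left hj₂
      rw [hget₂, stateAt_concat p₂ r (le_of_lt hj₂)]
      apply (formalPart_sub_eq_zero_iff fm _ (reactants_le p₂ hj₂)).mpr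
      refine ⟨hb₂, ?_⟩
      rw [← hfin]
      exact hb2.2
    · rw [rfsAt_concat_lt fm p₁ r hj, rfsAt_concat_lt fm p₂ r hj₂, ← hT,
        finalState_concat, finalState_concat, hfin]
  · -- turning point is the appended reaction
    have hjeq : j = p₁.length := by
      have hh := h
      simp only [List.length_append, List.length_cons, List.length_nil] at hh
      omega
    subst hjeq
    have hget : (p₁ ++ [r]).get ⟨p₁.length, h⟩ = r := by
      simp only [List.get_eq_getElem]
      exact List.getElem_concat_length rfl h
    have ha2 : formalClosure fm p₁ ≤ minInit p₁ :=
      (formalClosure_le_iff fm p₁ _).mpr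
        ((condA_concat fm p₁ r (le_refl p₁.length)).mp ha)
    have hb2 : formalPart fm (finalState p₁ - r.1) = 0 := by
      rw [hget, stateAt_concat p₁ r (le_refl p₁.length), stateAt_length,
        multiset_sandwich] at hb
      exact hb
    have hlt₂ : p₂.length < (p₂ ++ [r]).length := by simp
    refine ⟨p₂.length, hlt₂, ?_, ?_, ?_⟩
    · apply (condA_concat fm p₂ r (le_refl p₂.length)).mpr
      exact (formalClosure_le_iff fm p₂ _).mp (by rw [← hfc, ← hmin]; exact ha2)
    · have hget₂ : (p₂ ++ [r]).get ⟨p₂.length, hlt₂⟩ = r := by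
        simp only [List.get_eq_getElem]
        exact List.getElem_concat_length rfl hlt₂
      rw [hget₂, stateAt_concat p₂ r (le_refl p₂.length), stateAt_length,
        multiset_sandwich, ← hfin]
      exact hb2
    · rw [rfsAt_concat_length, rfsAt_concat_length, finalState_concat,
        finalState_concat, hfin]

theorem width_nil : width ([] : Pathway σ) = 0 := by
  simp [width, stateAt, minInit, finalFrom, List.range_succ]

theorem RFS_nil : RFS fm ([] : Pathway σ) = ∅ := by
  ext T
  simp [RFS]

theorem rfs_nonempty (p : Pathway σ) (hp : p ≠ []) (hw : width p = 0) :
    (RFS fm p).Nonempty := by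
  have hl : 0 < p.length := List.length_pos_iff.mpr hp
  have hmem : Multiset.card (stateAt p 0)
      ∈ (List.range (p.length + 1)).map (fun i => Multiset.card (stateAt p i)) :=
    List.mem_map.mpr ⟨0, List.mem_range.mpr (by omega), rfl⟩
  have h0 : Multiset.card (stateAt p 0) = 0 := by
    have hle := le_foldr_max hmem
    have hw' : ((List.range (p.length + 1)).map
        (fun i => Multiset.card (stateAt p i))).foldr max 0 = 0 := hw
    omega
  have h0' : stateAt p 0 = 0 := Multiset.card_eq_zero.mp h0
  refine ⟨rfsAt fm p 0, 0, hl, ?_, ?_, rfl⟩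
  · intro i hi
    have hi0 : i = 0 := Nat.le_zero.mp hi
    subst hi0
    rw [h0']
    simp [formalPart]
  · rw [h0', Multiset.zero_sub]
    simp [formalPart]

theorem ne_nil_of_sig (p₁ p₂ : Pathway σ) (hw : width p₁ = width p₂)
    (hrfs : RFS fm p₁ = RFS fm p₂) (h : p₁ ≠ []) : p₂ ≠ [] := by
  rintro rfl
  rw [width_nil] at hw
  rw [RFS_nil] at hrfs
  obtain ⟨T, hT⟩ := rfs_nonempty fm p₁ h hw
  rw [hrfs] at hT
  exact hT

theorem exists_witness (p₁ p₂ : Pathway σ) (r : Reaction σ)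
    (hfin : finalState p₁ = finalState p₂) (hdfs : DFS fm p₁ = DFS fm p₂)
    (hne : p₁ ≠ [] → p₂ ≠ []) (h₂ : Semiformal fm p₂)
    (c q : Pathway σ) (hq : q ≠ []) (hint : Interleave c q p₁)
    (hsc : Semiformal fm (c ++ [r])) (hsq : Semiformal fm q) :
    ∃ w w', Interleave (w ++ [r]) w' (p₂ ++ [r]) ∧ w' ≠ [] ∧
      Semiformal fm (w ++ [r]) ∧ Semiformal fm w' ∧
      finalState (w ++ [r]) = finalState (c ++ [r]) ∧ finalState w' = finalState q := by
  rcases eq_or_ne c [] with rfl | hc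
  · have hq_eq : q = p₁ := eq_of_interleave_nil hint
    subst hq_eq
    exact ⟨[], p₂, interleave_snoc_left r (interleave_nil_left p₂), hne hq,
      hsc, h₂, rfl, hfin.symm⟩
  · have hsc' := (semiformal_concat_iff fm c r).mp hsc
    have hmem : (finalState c, finalState q) ∈ DFS fm p₁ :=
      ⟨c, q, hc, hq, hint, hsc'.1, hsq, rfl⟩
    rw [hdfs] at hmem
    obtain ⟨w, w', hw, hw', hintw, hsw, hsw', heq⟩ := hmem
    obtain ⟨he1, he2⟩ : finalState c = finalState w ∧ finalState q = finalState w' := by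
      simpa [Prod.ext_iff] using heq
    refine ⟨w, w', interleave_snoc_left r hintw, hw', ?_, hsw', ?_, he2.symm⟩
    · exact (semiformal_concat_iff fm w r).mpr ⟨hsw, by rw [← he1]; exact hsc'.2⟩
    · rw [finalState_concat, finalState_concat, he1]

theorem DFS_concat_subset (p₁ p₂ : Pathway σ) (r : Reaction σ)
    (hfin : finalState p₁ = finalState p₂) (hdfs : DFS fm p₁ = DFS fm p₂)
    (hne : p₁ ≠ [] → p₂ ≠ []) (h₂ : Semiformal fm p₂) :
    DFS fm (p₁ ++ [r]) ⊆ DFS fm (p₂ ++ [r]) := by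
  rintro ⟨T₁, T₂⟩ ⟨q₁, q₂, hn1, hn2, hint, hs1, hs2, hpair⟩
  obtain ⟨hT1, hT2⟩ : T₁ = finalState q₁ ∧ T₂ = finalState q₂ := by
    simpa [Prod.ext_iff] using hpair
  rcases interleave_snoc r hint with ⟨t, rfl, ht⟩ | ⟨t, rfl, ht⟩
  · obtain ⟨w, w', hi, hwne, hsw, hsw', hf1, hf2⟩ :=
      exists_witness fm p₁ p₂ r hfin hdfs hne h₂ t q₂ hn2 ht hs1 hs2
    exact ⟨w ++ [r], w', by simp, hwne, hi, hsw, hsw',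
      by rw [hT1, hT2, hf1, hf2]⟩
  · obtain ⟨w, w', hi, hwne, hsw, hsw', hf1, hf2⟩ :=
      exists_witness fm p₁ p₂ r hfin hdfs hne h₂ t q₁ hn1 (interleave_symm ht) hs2 hs1
    exact ⟨w', w ++ [r], hwne, by simp, interleave_symm hi, hsw', hsw,
      by rw [hT1, hT2, hf1, hf2]⟩

end SignatureAppendAux2


/-- If two semiformal pathways have the same signature, appending the same reaction
to both yields pathways with the same signature. -/
theorem signature_append {σ : Type} [DecidableEq σ] (fm : σ → Bool)
    (p₁ p₂ : Pathway σ) (h₁ : Semiformal fm p₁) (h₂ : Semiformal fm p₂)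
    (hsig : signature fm p₁ = signature fm p₂) (r : Reaction σ) :
    signature fm (p₁ ++ [r]) = signature fm (p₂ ++ [r]) := by
  obtain ⟨hmin, hfin, hw, hfc, hdfs, hrfs⟩ :
      minInit p₁ = minInit p₂ ∧ finalState p₁ = finalState p₂ ∧
      width p₁ = width p₂ ∧ formalClosure fm p₁ = formalClosure fm p₂ ∧
      DFS fm p₁ = DFS fm p₂ ∧ RFS fm p₁ = RFS fm p₂ := by
    simpa [signature, Prod.ext_iff] using hsig
  have hne12 : p₁ ≠ [] → p₂ ≠ [] := ne_nil_of_sig fm p₁ p₂ hw hrfs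
  have hne21 : p₂ ≠ [] → p₁ ≠ [] := ne_nil_of_sig fm p₂ p₁ hw.symm hrfs.symm
  simp only [signature, Prod.mk.injEq]
  refine ⟨?_, ?_, ?_, ?_, ?_, ?_⟩
  · rw [minInit_concat, minInit_concat, hmin, hfin]
  · rw [finalState_concat, finalState_concat, hfin]
  · rw [width_concat, width_concat, finalState_concat, finalState_concat, hw, hfin]
  · rw [formalClosure_concat, formalClosure_concat, finalState_concat,
      finalState_concat, hfc, hfin]
  · exact Set.Subset.antisymm
      (DFS_concat_subset fm p₁ p₂ r hfin hdfs hne12 h₂)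
      (DFS_concat_subset fm p₂ p₁ r hfin.symm hdfs.symm hne21 h₁)
  · exact Set.Subset.antisymm
      (RFS_concat_subset fm p₁ p₂ r hmin hfin hfc hrfs)
      (RFS_concat_subset fm p₂ p₁ r hmin.symm hfin.symm hfc.symm hrfs.symm)

end CRNVerif
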